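/- Let N ≥ 2 be a natural number and define θ : Fin N → ℝ by θ_i = π·i/N (i.e., the angles 0, π/N, 2π/N, …, (N−1)π/N). Then for all distinct indices i, j in Fin N, cos(2(θ_i − θ_j)) ≤ cos(2π/N). -/

import Mathlib

open Real

lemma cos_bound_aux (a x : ℝ) (ha0 : 0 ≤ a) (hapi : a ≤ Real.pi)
    (h1 : a ≤ x) (h2 : x ≤ 2 * Real.pi - a) :
    Real.cos x ≤ Real.cos a := by
  rcases le_or_gt x Real.pi with hx | hx
  · exact Real.cos_le_cos_of_nonneg_of_le_pi ha0 hx h1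
  · have : Real.cos x = Real.cos (2 * Real.pi - x) := by
      rw [Real.cos_sub]
      simp [Real.cos_two_pi, Real.sin_two_pi]
    rw [this]
    apply Real.cos_le_cos_of_nonneg_of_le_pi ha0
    · linarith
    · linarith

lemma key (N : ℕ) (hN : 2 ≤ N) (k : ℕ) (hk1 : 1 ≤ k) (hk2 : k ≤ N - 1) :
    Real.cos (2 * Real.pi * k / N) ≤ Real.cos (2 * Real.pi / N) := by
  have hNpos : (0:ℝ) < N := by positivity
  have hkN : (k:ℝ) ≤ N - 1 := by
    have : (k:ℝ) ≤ ((N - 1 : ℕ) : ℝ) := by exact_mod_cast hk2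
    rw [Nat.cast_sub (by omega)] at this
    push_cast at this ⊢
    linarith
  have hk1' : (1:ℝ) ≤ k := by exact_mod_cast hk1
  have hpi := Real.pi_pos
  have h2 : (2:ℝ) ≤ N := by exact_mod_cast hN
  apply cos_bound_aux
  · positivity
  · rw [div_le_iff₀ hNpos]
    nlinarith
  · rw [div_le_div_iff₀ hNpos hNpos]
    nlinarith [mul_nonneg (mul_nonneg (by linarith : (0:ℝ) ≤ (k:ℝ) - 1) (le_of_lt hpi)) hNpos.le]
  · rw [div_le_iff₀ hNpos]
    have : 2 * Real.pi * (k:ℝ) ≤ 2 * Real.pi * (N - 1) := by nlinarith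
    calc 2 * Real.pi * (k:ℝ) ≤ 2 * Real.pi * (N - 1) := this
      _ = (2 * Real.pi - 2 * Real.pi / N) * N := by field_simp

theorem stmt_4 (N : ℕ) (hN : 2 ≤ N) (θ : Fin N → ℝ)
    (hθ : ∀ i : Fin N, θ i = Real.pi * (i : ℕ) / N) :
    ∀ i j : Fin N, i ≠ j →
      Real.cos (2 * (θ i - θ j)) ≤ Real.cos (2 * Real.pi / N) := by
  have main : ∀ i j : Fin N, (j:ℕ) < (i:ℕ) →
      Real.cos (2 * (θ i - θ j)) ≤ Real.cos (2 * Real.pi / N) := by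
    intro i j hij
    have hk1 : 1 ≤ (i:ℕ) - (j:ℕ) := by omega
    have hk2 : (i:ℕ) - (j:ℕ) ≤ N - 1 := by omega
    have := key N hN ((i:ℕ) - (j:ℕ)) hk1 hk2
    have heq : 2 * (θ i - θ j) = 2 * Real.pi * (((i:ℕ) - (j:ℕ) : ℕ) : ℝ) / N := by
      rw [hθ i, hθ j, Nat.cast_sub (le_of_lt hij)]
      field_simp
    rw [heq]; exact this
  intro i j hij
  rcases lt_trichotomy ((j:ℕ)) ((i:ℕ)) with h | h | h
  · exact main i j h
  · exact absurd (Fin.ext h.symm) hij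
  · have : 2 * (θ i - θ j) = -(2 * (θ j - θ i)) := by ring
    rw [this, Real.cos_neg]
    exact main j i h
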